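/- Let S be a closed set of pairs. For every α = (α_1,…,α_n) ∈ (ℤ_{>0})^n and every g ∈ SL_n(ℂ), one has g·p_{S,α} = p_{S,α} (i.e., g fixes each component (⋀_{i∈S_j} e_i) ⊗ ẽ_n^{⊗α_j} of q_{S,α} and each component e_1∧…∧e_i of r_n) if and only if g ∈ U_S. That is, the stabiliser of p_{S,α} in SL_n(ℂ) is U_S. -/

import Mathlib

open Matrix Filter Topology

noncomputable section

/-- A finite set `S` of pairs `(i,j)` of indices with `i < j` is *closed* if
`(i,j) ∈ S` and `(j,k) ∈ S` imply `(i,k) ∈ S`. -/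
def PairsClosed {n : ℕ} (S : Finset (Fin n × Fin n)) : Prop :=
  (∀ p ∈ S, p.1 < p.2) ∧ ∀ i j k : Fin n, (i, j) ∈ S → (j, k) ∈ S → (i, k) ∈ S

/-- The subgroup `U_S` of `SL_n(ℂ)`, as a set: matrices that are upper triangular,
with ones on the diagonal, and vanishing at each entry `(i,j)` with `i < j` and
`(i,j) ∉ S`. -/
def USet {n : ℕ} (S : Finset (Fin n × Fin n)) :
    Set (Matrix.SpecialLinearGroup (Fin n) ℂ) :=
  {u | (∀ i j : Fin n, j < i → u.val i j = 0) ∧ (∀ i : Fin n, u.val i i = 1) ∧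
       ∀ i j : Fin n, i < j → (i, j) ∉ S → u.val i j = 0}

/-- `S_j = {j} ∪ {i : (i,j) ∈ S}`. -/
def colS {n : ℕ} (S : Finset (Fin n × Fin n)) (j : Fin n) : Finset (Fin n) :=
  insert j ((S.filter (fun p => p.2 = j)).image Prod.fst)

/-- The index set of the standard basis of `Λ^k ℂ^n`: subsets of `{1,…,n}` of size `k`. -/
abbrev SubK (n k : ℕ) := {C : Finset (Fin n) // C.card = k}

/-- The increasing enumeration of a size-`k` subset of `{1,…,n}`. -/
def enumK {n k : ℕ} (C : SubK n k) (a : Fin k) : Fin n :=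
  (C.1.orderIsoOfFin C.2 a : Fin n)

/-- The `k`-th exterior power `Λ^k ℂ^n`, in the coordinates given by its standard basis
`⋀_{i∈C} e_i`, `C ⊆ {1,…,n}`, `|C| = k`. -/
abbrev ExtP (n k : ℕ) := SubK n k → ℂ

/-- The standard basis vector `e_i` of `ℂ^n`. -/
def stdVec {n : ℕ} (i : Fin n) : Fin n → ℂ := Pi.single i 1

/-- The wedge `v_1 ∧ … ∧ v_k ∈ Λ^k ℂ^n` of a family of vectors, in standard coordinates:
its coordinate along the basis vector `⋀_{i∈C} e_i` is the determinant of the `k×k`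
matrix of the `C`-coordinates of `v_1,…,v_k`. -/
def wedgeFam {n : ℕ} (k : ℕ) (v : Fin k → (Fin n → ℂ)) : ExtP n k :=
  fun C => Matrix.det (Matrix.of fun a b : Fin k => v b (enumK C a))

/-- `⋀_{i∈C} e_i`, the wedge of the standard basis vectors indexed by `C`, taken in
increasing order of indices. -/
def wedgeBasis {n : ℕ} (k : ℕ) (C : Finset (Fin n)) (h : C.card = k) : ExtP n k :=
  wedgeFam k (fun a => stdVec (C.orderIsoOfFin h a))

/-- `⋀_{i∈D} (g e_i)`, the wedge of the columns of `g` indexed by `D`, taken in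
increasing order of indices. -/
def colWedge {n : ℕ} (k : ℕ) (g : Matrix (Fin n) (Fin n) ℂ) (D : Finset (Fin n))
    (h : D.card = k) : ExtP n k :=
  wedgeFam k (fun a => g.mulVec (stdVec (D.orderIsoOfFin h a)))

/-- The minor of `g` with rows `C` and columns `D` (both of size `k`, in increasing
order of indices). -/
def gminor {n : ℕ} (k : ℕ) (g : Matrix (Fin n) (Fin n) ℂ) (C D : SubK n k) : ℂ :=
  Matrix.det (Matrix.of fun a b : Fin k => g (enumK C a) (enumK D b))

/-- The action of `g` on `Λ^k ℂ^n` (the `k`-th exterior power of the standard action of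
`g` on `ℂ^n`), in standard coordinates: the matrix of `Λ^k g` in the standard basis is
the `k`-th compound matrix of `g`, whose entries are the `k×k` minors of `g`. -/
def extAct {n : ℕ} (k : ℕ) (g : Matrix (Fin n) (Fin n) ℂ) (x : ExtP n k) : ExtP n k :=
  fun C => ∑ D : SubK n k, gminor k g C D * x D

/-- `e_1 ∧ … ∧ e_{i}`, the wedge of an initial segment of the standard basis, an element
of `Λ^i ℂ^n`; here the index `i` runs through `1,…,n` as `(i:ℕ)+1` for `i : Fin n`.
These are the components of the point `r_n ∈ W_n = ⨁_{i=1}^n Λ^i ℂ^n`. -/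
def rComp {n : ℕ} (i : Fin n) : ExtP n ((i : ℕ) + 1) :=
  wedgeBasis _ (Finset.Iic i) (by simp)

/-- Index type for the standard basis of `⨂_{i=1}^n Λ^i ℂ^n`. -/
abbrev TIdx (n : ℕ) := (i : Fin n) → SubK n ((i : ℕ) + 1)

/-- Coordinates of `ẽ_n = e_1 ⊗ (e_1∧e_2) ⊗ … ⊗ (e_1∧…∧e_n) ∈ ⨂_{i=1}^n Λ^i ℂ^n`:
the coordinates of a pure tensor are the products of the coordinates of its factors. -/
def eTilde {n : ℕ} : TIdx n → ℂ := fun f => ∏ i : Fin n, rComp i (f i)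

/-- Index type for the standard basis of the `j`-th component
`Λ^{|S_j|} ℂ^n ⊗ (⨂_{i=1}^n Λ^i ℂ^n)^{⊗ α_j}` of `V_{S,α}`. -/
abbrev VIdx (n : ℕ) (S : Finset (Fin n × Fin n)) (α : Fin n → ℕ) (j : Fin n) :=
  SubK n ((colS S j).card) × (Fin (α j) → TIdx n)

/-- Coordinates of the `j`-th component `(⋀_{i∈S_j} e_i) ⊗ ẽ_n^{⊗α_j}` of `q_{S,α}`. -/
def qComp {n : ℕ} (S : Finset (Fin n × Fin n)) (α : Fin n → ℕ) (j : Fin n) :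
    VIdx n S α j → ℂ :=
  fun p => wedgeBasis _ (colS S j) rfl p.1 * ∏ a : Fin (α j), eTilde (p.2 a)

/-- Matrix entry of the action of `g` on `⨂_{i=1}^n Λ^i ℂ^n` (the diagonal action via
the exterior powers of the standard action). -/
def tenMinor {n : ℕ} (g : Matrix (Fin n) (Fin n) ℂ) (f f' : TIdx n) : ℂ :=
  ∏ i : Fin n, gminor _ g (f i) (f' i)

/-- The action of `g` on the `j`-th component of `V_{S,α}`, i.e. on
`Λ^{|S_j|} ℂ^n ⊗ (⨂_{i=1}^n Λ^i ℂ^n)^{⊗ α_j}`, in standard coordinates. -/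
def vAct {n : ℕ} (S : Finset (Fin n × Fin n)) (α : Fin n → ℕ) (j : Fin n)
    (g : Matrix (Fin n) (Fin n) ℂ) (x : VIdx n S α j → ℂ) : VIdx n S α j → ℂ :=
  fun p => ∑ p' : VIdx n S α j,
    (gminor _ g p.1 p'.1 * ∏ a : Fin (α j), tenMinor g (p.2 a) (p'.2 a)) * x p'

namespace Stmt2Aux

variable {n : ℕ}

lemma enumK_def {k : ℕ} (C : SubK n k) : enumK C = ⇑(C.1.orderEmbOfFin C.2) := rfl

lemma enumK_strictMono {k : ℕ} (C : SubK n k) : StrictMono (enumK C) :=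
  (C.1.orderEmbOfFin C.2).strictMono

lemma enumK_injective {k : ℕ} (C : SubK n k) : Function.Injective (enumK C) :=
  (enumK_strictMono C).injective

lemma enumK_mem {k : ℕ} (C : SubK n k) (a : Fin k) : enumK C a ∈ C.1 :=
  Finset.orderEmbOfFin_mem _ C.2 _

lemma enumK_surj {k : ℕ} (C : SubK n k) {x : Fin n} (hx : x ∈ C.1) :
    ∃ a, enumK C a = x := by
  obtain ⟨a, ha⟩ := (C.1.orderIsoOfFin C.2).surjective ⟨x, hx⟩
  exact ⟨a, by rw [enumK]; rw [ha]⟩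

lemma exists_not_mem {k : ℕ} (C : SubK n k) {T : Finset (Fin n)} (hT : T.card = k)
    (hne : C.1 ≠ T) : ∃ r ∈ C.1, r ∉ T := by
  by_contra h
  push_neg at h
  exact hne (Finset.eq_of_subset_of_card_le h (by rw [C.2, hT]))

lemma wedgeBasis_apply {k : ℕ} (C : Finset (Fin n)) (h : C.card = k) (D : SubK n k) :
    wedgeBasis k C h D = if D.1 = C then 1 else 0 := by
  unfold wedgeBasis wedgeFam
  split_ifs with hDC
  · obtain ⟨D, hD⟩ := D
    subst hDC
    have : (Matrix.of fun a b : Fin k =>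
        stdVec (n := n) (D.orderIsoOfFin h b) (enumK ⟨D, hD⟩ a)) = 1 := by
      ext a b
      simp only [Matrix.of_apply, stdVec, Pi.single_apply, Matrix.one_apply]
      have h2 : enumK (⟨D, hD⟩ : SubK n k) a = D.orderEmbOfFin h b ↔ a = b := by
        rw [enumK_def, Finset.orderEmbOfFin_eq_orderEmbOfFin_iff]
        exact ⟨fun h => Fin.val_injective h, fun h => by rw [h]⟩
      simp [h2]
    rw [this, Matrix.det_one]
  · obtain ⟨r, hrD, hrC⟩ := exists_not_mem D h hDC
    obtain ⟨a₀, ha₀⟩ := enumK_surj D hrD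
    apply Matrix.det_eq_zero_of_row_eq_zero a₀
    intro b
    simp only [Matrix.of_apply, stdVec, Pi.single_apply, ha₀]
    rw [if_neg]
    intro hc
    exact hrC (hc ▸ (C.orderIsoOfFin h b).2)


lemma gminor_zero_off {k : ℕ} (g : Matrix (Fin n) (Fin n) ℂ) {T : Finset (Fin n)}
    (hT : T.card = k) (C : SubK n k)
    (hsupp : ∀ c ∈ T, ∀ r, r ∉ T → g r c = 0) (hne : C.1 ≠ T) :
    gminor k g C ⟨T, hT⟩ = 0 := by
  obtain ⟨r, hrC, hrT⟩ := exists_not_mem C hT hne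
  obtain ⟨a₀, ha₀⟩ := enumK_surj C hrC
  apply Matrix.det_eq_zero_of_row_eq_zero a₀
  intro b
  simp only [Matrix.of_apply, ha₀]
  exact hsupp _ (enumK_mem _ b) r hrT

lemma gminor_diag {k : ℕ} (g : Matrix (Fin n) (Fin n) ℂ) {T : Finset (Fin n)}
    (hT : T.card = k) (htri : ∀ r c : Fin n, c < r → g r c = 0)
    (hdiag : ∀ t ∈ T, g t t = 1) :
    gminor k g ⟨T, hT⟩ ⟨T, hT⟩ = 1 := by
  rw [gminor, Matrix.det_of_upperTriangular]
  · rw [Finset.prod_eq_one]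
    intro a _
    exact hdiag _ (enumK_mem _ a)
  · intro a b hba
    exact htri _ _ (enumK_strictMono _ hba)

lemma gminor_delta {k : ℕ} (g : Matrix (Fin n) (Fin n) ℂ) {T : Finset (Fin n)}
    (hT : T.card = k) (C : SubK n k)
    (hsupp : ∀ c ∈ T, ∀ r, r ∉ T → g r c = 0)
    (htri : ∀ r c : Fin n, c < r → g r c = 0)
    (hdiag : ∀ t ∈ T, g t t = 1) :
    gminor k g C ⟨T, hT⟩ = if C.1 = T then 1 else 0 := by
  split_ifs with hC
  · obtain ⟨C, hC'⟩ := C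
    subst hC
    exact gminor_diag g hC' htri hdiag
  · exact gminor_zero_off g hT C hsupp hC

lemma key {k : ℕ} (g : Matrix (Fin n) (Fin n) ℂ) (T : Finset (Fin n)) (hk : T.card = k)
    (hg : ∀ C : SubK n k, gminor k g C ⟨T, hk⟩ = if C.1 = T then 1 else 0)
    {c r : Fin n} (hc : c ∈ T) (hr : r ∉ T) : g r c = 0 := by
  have hC : (insert r T).card = k + 1 := by
    rw [Finset.card_insert_of_notMem hr, hk]
  set C : SubK n (k + 1) := ⟨insert r T, hC⟩ with hCdef
  set e := enumK C with he
  set A : Matrix (Fin (k + 1)) (Fin (k + 1)) ℂ :=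
    Matrix.of fun a b => Fin.cases (g (e a) c) (fun b' => g (e a) (enumK ⟨T, hk⟩ b')) b
    with hA
  obtain ⟨b₀, hb₀⟩ := enumK_surj (⟨T, hk⟩ : SubK n k) hc
  have hdet0 : A.det = 0 := by
    apply Matrix.det_zero_of_column_eq (Ne.symm (Fin.succ_ne_zero b₀))
    intro a
    simp [hA, hb₀]
  rw [Matrix.det_succ_column_zero] at hdet0
  -- identify the submatrices as minors
  have herase : ∀ i : Fin (k + 1), ((insert r T).erase (e i)).card = k := by
    intro i
    rw [Finset.card_erase_of_mem (enumK_mem C i), hC]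
    omega
  have hsub : ∀ i : Fin (k + 1),
      (A.submatrix i.succAbove Fin.succ).det =
        gminor k g ⟨(insert r T).erase (e i), herase i⟩ ⟨T, hk⟩ := by
    intro i
    have henum : ∀ a : Fin k,
        enumK (⟨(insert r T).erase (e i), herase i⟩ : SubK n k) a = e (i.succAbove a) := by
      have := Finset.orderEmbOfFin_unique (herase i)
        (f := fun a => e (i.succAbove a))
        (fun a => Finset.mem_erase.mpr
          ⟨enumK_injective C |>.ne (Fin.succAbove_ne i a), enumK_mem C _⟩)
        ((enumK_strictMono C).comp (Fin.strictMono_succAbove i))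
      intro a
      rw [enumK_def, ← this]
    rw [gminor]
    congr 1
    ext a b
    simp [hA, henum]
  have hkey : ∀ i : Fin (k + 1), ((insert r T).erase (e i) = T) ↔ e i = r := by
    intro i
    constructor
    · intro h
      by_contra hne
      have : r ∈ (insert r T).erase (e i) :=
        Finset.mem_erase.mpr ⟨fun hh => hne hh.symm, Finset.mem_insert_self r T⟩
      rw [h] at this
      exact hr this
    · intro h
      rw [h, Finset.erase_insert hr]
  simp only [hsub] at hdet0
  rw [Finset.sum_congr rfl (fun i _ => by rw [hg, if_congr (hkey i) rfl rfl])] at hdet0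
  obtain ⟨i₀, hi₀⟩ := enumK_surj C (Finset.mem_insert_self r T)
  rw [Finset.sum_eq_single i₀ (fun i _ hne => by
      rw [if_neg (fun hh => hne (enumK_injective C (hh.trans hi₀.symm))), mul_zero])
    (fun h => absurd (Finset.mem_univ i₀) h)] at hdet0
  rw [if_pos hi₀, mul_one] at hdet0
  have hi₀' : e i₀ = r := hi₀
  have hA0 : A i₀ 0 = g r c := by simp [hA, hi₀']
  rw [hA0] at hdet0
  have : ((-1 : ℂ)) ^ (i₀ : ℕ) ≠ 0 := by
    apply pow_ne_zero
    norm_num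
  field_simp at hdet0
  exact (mul_eq_zero.mp hdet0).resolve_left this


lemma prod_indicator {ι : Type*} [Fintype ι] (p : ι → Prop) [DecidablePred p] :
    (∏ i, if p i then (1 : ℂ) else 0) = if ∀ i, p i then 1 else 0 := by
  split_ifs with h
  · exact Finset.prod_eq_one fun i _ => if_pos (h i)
  · push_neg at h
    obtain ⟨i, hi⟩ := h
    exact Finset.prod_eq_zero (Finset.mem_univ i) (if_neg hi)

lemma mul_indicator {P Q : Prop} [Decidable P] [Decidable Q] :
    (if P then (1 : ℂ) else 0) * (if Q then 1 else 0) = if P ∧ Q then 1 else 0 := by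
  by_cases hP : P <;> by_cases hQ : Q <;> simp [hP, hQ]

lemma prod_enumK {k : ℕ} (C : SubK n k) (h : Fin n → ℂ) :
    ∏ a : Fin k, h (enumK C a) = ∏ t ∈ C.1, h t := by
  rw [← Finset.prod_coe_sort C.1 h]
  exact Fintype.prod_equiv (C.1.orderIsoOfFin C.2).toEquiv _ _ (fun a => rfl)

lemma rComp_apply (i : Fin n) (D : SubK n ((i : ℕ) + 1)) :
    rComp i D = if D.1 = Finset.Iic i then 1 else 0 :=
  wedgeBasis_apply _ _ _

lemma extAct_rComp (g : Matrix (Fin n) (Fin n) ℂ) (i : Fin n) (C : SubK n ((i : ℕ) + 1)) :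
    extAct ((i : ℕ) + 1) g (rComp i) C
      = gminor ((i : ℕ) + 1) g C ⟨Finset.Iic i, by simp⟩ := by
  rw [extAct, Finset.sum_eq_single (⟨Finset.Iic i, by simp⟩ : SubK n ((i : ℕ) + 1))]
  · rw [rComp_apply, if_pos rfl, mul_one]
  · intro D _ hne
    rw [rComp_apply, if_neg (fun h => hne (Subtype.ext h)), mul_zero]
  · exact fun h => absurd (Finset.mem_univ _) h

lemma eTilde_apply (f : TIdx n) :
    eTilde f = if ∀ i : Fin n, (f i).1 = Finset.Iic i then 1 else 0 := by
  rw [eTilde, Finset.prod_congr rfl (fun i _ => rComp_apply i (f i))]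
  by_cases h : ∀ i : Fin n, (f i).1 = Finset.Iic i
  · rw [if_pos h]
    exact Finset.prod_eq_one fun i _ => if_pos (h i)
  · obtain ⟨i, hi⟩ := not_forall.mp h
    rw [if_neg h]
    exact Finset.prod_eq_zero (Finset.mem_univ i) (if_neg hi)

/-- The distinguished index of the coordinate of `q` which is `1`. -/
def pPoint (S : Finset (Fin n × Fin n)) (α : Fin n → ℕ) (j : Fin n) : VIdx n S α j :=
  (⟨colS S j, rfl⟩, fun _ i => ⟨Finset.Iic i, by simp⟩)

lemma point_iff {S : Finset (Fin n × Fin n)} {α : Fin n → ℕ} {j : Fin n}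
    (p : VIdx n S α j) :
    p = pPoint S α j ↔
      (p.1.1 = colS S j ∧ ∀ a, ∀ i : Fin n, (p.2 a i).1 = Finset.Iic i) := by
  constructor
  · rintro rfl
    exact ⟨rfl, fun a i => rfl⟩
  · rintro ⟨h1, h2⟩
    obtain ⟨p1, p2⟩ := p
    refine Prod.ext (Subtype.ext h1) ?_
    funext a i
    exact Subtype.ext (h2 a i)

lemma qComp_apply (S : Finset (Fin n × Fin n)) (α : Fin n → ℕ) (j : Fin n)
    (p : VIdx n S α j) :
    qComp S α j p =
      if (p.1.1 = colS S j ∧ ∀ a, ∀ i : Fin n, (p.2 a i).1 = Finset.Iic i)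
        then 1 else 0 := by
  rw [qComp, wedgeBasis_apply,
    Finset.prod_congr rfl (fun a _ => eTilde_apply (p.2 a))]
  by_cases h1 : p.1.1 = colS S j
  · by_cases h2 : ∀ a, ∀ i : Fin n, (p.2 a i).1 = Finset.Iic i
    · rw [if_pos h1, if_pos ⟨h1, h2⟩, Finset.prod_eq_one (fun a _ => if_pos (h2 a)),
        one_mul]
    · obtain ⟨a, ha⟩ := not_forall.mp h2
      have hz : (if ∀ i : Fin n, (p.2 a i).1 = Finset.Iic i then (1 : ℂ) else 0) = 0 :=
        if_neg ha
      rw [Finset.prod_eq_zero (Finset.mem_univ a) hz, mul_zero,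
        if_neg (fun hc => h2 hc.2)]
  · rw [if_neg h1, zero_mul, if_neg (fun hc => h1 hc.1)]

lemma qComp_point (S : Finset (Fin n × Fin n)) (α : Fin n → ℕ) (j : Fin n)
    (p : VIdx n S α j) :
    qComp S α j p = if p = pPoint S α j then 1 else 0 := by
  rw [qComp_apply, if_congr (point_iff p).symm rfl rfl]

lemma vAct_qComp (S : Finset (Fin n × Fin n)) (α : Fin n → ℕ) (j : Fin n)
    (g : Matrix (Fin n) (Fin n) ℂ) (p : VIdx n S α j) :
    vAct S α j g (qComp S α j) p =
      gminor _ g p.1 ⟨colS S j, rfl⟩ *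
        ∏ a : Fin (α j), tenMinor g (p.2 a) (fun i => ⟨Finset.Iic i, by simp⟩) := by
  rw [vAct, Finset.sum_eq_single (pPoint S α j)]
  · rw [qComp_point, if_pos rfl, mul_one]
    rfl
  · intro p' _ hne
    rw [qComp_point, if_neg hne, mul_zero]
  · exact fun h => absurd (Finset.mem_univ _) h

end Stmt2Aux
open Stmt2Aux
/-- For every `α ∈ (ℤ_{>0})^n` and every `g ∈ SL_n(ℂ)`, `g` fixes the
point `p_{S,α} = q_{S,α} ⊕ r_n ∈ W_{S,α} = V_{S,α} ⊕ W_n` (i.e. `g` fixes each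
component `(⋀_{i∈S_j} e_i) ⊗ ẽ_n^{⊗α_j}` of `q_{S,α}` and each component
`e_1∧…∧e_i` of `r_n`) if and only if `g ∈ U_S`: the stabiliser of `p_{S,α}` in
`SL_n(ℂ)` is `U_S`. -/
theorem stmt2 {n : ℕ} (hn : 1 ≤ n) (S : Finset (Fin n × Fin n)) (hS : PairsClosed S)
    (α : Fin n → ℕ) (hα : ∀ i, 0 < α i)
    (g : Matrix.SpecialLinearGroup (Fin n) ℂ) :
    ((∀ j : Fin n, vAct S α j g.val (qComp S α j) = qComp S α j) ∧
      (∀ i : Fin n, extAct ((i : ℕ) + 1) g.val (rComp i) = rComp i))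
      ↔ g ∈ USet S := by
  constructor
  · rintro ⟨hq, hr⟩
    have hgm : ∀ (i : Fin n) (C : SubK n ((i : ℕ) + 1)),
        gminor ((i : ℕ) + 1) g.val C ⟨Finset.Iic i, by simp⟩
          = if C.1 = Finset.Iic i then 1 else 0 := by
      intro i C
      rw [← extAct_rComp, hr i, rComp_apply]
    have htri : ∀ r c : Fin n, c < r → g.val r c = 0 := by
      intro r c hcr
      exact key g.val (Finset.Iic c) (by simp) (hgm c)
        (Finset.mem_Iic.mpr le_rfl) (by simp [Finset.mem_Iic, hcr.not_ge])
    have hprod : ∀ c : Fin n, ∏ t ∈ Finset.Iic c, g.val t t = 1 := by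
      intro c
      have h2 : gminor ((c : ℕ) + 1) g.val ⟨Finset.Iic c, by simp⟩ ⟨Finset.Iic c, by simp⟩
          = ∏ t ∈ Finset.Iic c, g.val t t := by
        refine (Matrix.det_of_upperTriangular fun a b hba => ?_).trans ?_
        · exact htri _ _ (enumK_strictMono _ hba)
        · simp only [Matrix.of_apply]
          exact prod_enumK _ (fun t => g.val t t)
      have h := hgm c ⟨Finset.Iic c, by simp⟩
      rw [if_pos rfl, h2] at h
      exact h
    have hdiagN : ∀ m : ℕ, ∀ c : Fin n, (c : ℕ) < m → g.val c c = 1 := by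
      intro m
      induction m with
      | zero => intro c hc; omega
      | succ m IH =>
        intro c hc
        have h1 := hprod c
        rw [← Finset.Iio_insert, Finset.prod_insert (by simp),
          Finset.prod_eq_one (fun t ht => IH t
            (by
              have h3 : t < c := Finset.mem_Iio.mp ht
              have h4 : (t : ℕ) < (c : ℕ) := h3
              omega)), mul_one] at h1
        exact h1
    have hdiag : ∀ c : Fin n, g.val c c = 1 := fun c => hdiagN ((c : ℕ) + 1) c (by omega)
    have hgm2 : ∀ (j : Fin n) (C : SubK n ((colS S j).card)),
        gminor _ g.val C ⟨colS S j, rfl⟩ = if C.1 = colS S j then 1 else 0 := by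
      intro j C
      have h := congrFun (hq j) ((C, fun _ i => ⟨Finset.Iic i, by simp⟩) : VIdx n S α j)
      rw [vAct_qComp, qComp_point] at h
      have hten : (∏ a : Fin (α j), tenMinor g.val
          ((fun (_ : Fin (α j)) (i : Fin n) => (⟨Finset.Iic i, by simp⟩ : SubK n ((i : ℕ) + 1))) a)
          (fun i => ⟨Finset.Iic i, by simp⟩)) = 1 := by
        refine Finset.prod_eq_one fun a _ => ?_
        rw [tenMinor]
        exact Finset.prod_eq_one fun i _ => by rw [hgm i, if_pos rfl]
      rw [hten, mul_one] at h
      have hiff : ((C, fun (_ : Fin (α j)) (i : Fin n) =>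
          (⟨Finset.Iic i, by simp⟩ : SubK n ((i : ℕ) + 1))) = pPoint S α j)
            ↔ C.1 = colS S j := by
        rw [point_iff]
        simp
      rw [if_congr hiff rfl rfl] at h
      exact h
    refine ⟨htri, hdiag, ?_⟩
    intro i j hij hnS
    have hiT : i ∉ colS S j := by
      rw [colS, Finset.mem_insert]
      rintro (rfl | hmem)
      · exact absurd rfl hij.ne
      · obtain ⟨p, hp, hp1⟩ := Finset.mem_image.mp hmem
        obtain ⟨hpS, hp2⟩ := Finset.mem_filter.mp hp
        apply hnS
        have hpe : p = (i, j) := Prod.ext hp1 hp2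
        rwa [hpe] at hpS
    exact key g.val (colS S j) rfl (hgm2 j) (Finset.mem_insert_self j _) hiT
  · rintro ⟨htri, hdiag, hS0⟩
    have hsuppI : ∀ i : Fin n, ∀ c ∈ Finset.Iic i, ∀ r, r ∉ Finset.Iic i → g.val r c = 0 :=
      fun i c hc r hrn => htri r c (lt_of_le_of_lt (Finset.mem_Iic.mp hc)
        (not_le.mp (fun hh => hrn (Finset.mem_Iic.mpr hh))))
    have hsuppC : ∀ j : Fin n, ∀ c ∈ colS S j, ∀ r, r ∉ colS S j → g.val r c = 0 := by
      intro j c hc r hr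
      rcases lt_trichotomy c r with h | h | h
      · exact htri r c h
      · exact absurd (h ▸ hc) hr
      · by_cases hrc : (r, c) ∈ S
        · exfalso
          apply hr
          rw [colS, Finset.mem_insert]
          rcases Finset.mem_insert.mp hc with rfl | hcm
          · exact Or.inr (Finset.mem_image.mpr
              ⟨(r, c), Finset.mem_filter.mpr ⟨hrc, rfl⟩, rfl⟩)
          · obtain ⟨p, hp, hp1⟩ := Finset.mem_image.mp hcm
            obtain ⟨hpS, hp2⟩ := Finset.mem_filter.mp hp
            have hcj : (c, j) ∈ S := by
              have hpe : p = (c, j) := Prod.ext hp1 hp2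
              rwa [hpe] at hpS
            exact Or.inr (Finset.mem_image.mpr
              ⟨(r, j), Finset.mem_filter.mpr ⟨hS.2 r c j hrc hcj, rfl⟩, rfl⟩)
        · exact hS0 r c h hrc
    constructor
    · intro j
      funext p
      rw [vAct_qComp, qComp_apply]
      have h1 : gminor _ g.val p.1 ⟨colS S j, rfl⟩
          = if p.1.1 = colS S j then 1 else 0 :=
        gminor_delta g.val rfl p.1 (hsuppC j) htri (fun t _ => hdiag t)
      have h2 : ∀ a, tenMinor g.val (p.2 a) (fun i => ⟨Finset.Iic i, by simp⟩)
          = if ∀ i : Fin n, (p.2 a i).1 = Finset.Iic i then 1 else 0 := by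
        intro a
        rw [tenMinor, Finset.prod_congr rfl (fun i _ =>
          gminor_delta g.val (by simp) (p.2 a i) (hsuppI i) htri (fun t _ => hdiag t))]
        by_cases h : ∀ i : Fin n, (p.2 a i).1 = Finset.Iic i
        · rw [if_pos h]
          exact Finset.prod_eq_one fun i _ => if_pos (h i)
        · obtain ⟨i, hi⟩ := not_forall.mp h
          rw [if_neg h]
          exact Finset.prod_eq_zero (Finset.mem_univ i) (if_neg hi)
      rw [h1, Finset.prod_congr rfl (fun a _ => h2 a)]
      by_cases hP : p.1.1 = colS S j
      · by_cases hQ : ∀ a, ∀ i : Fin n, (p.2 a i).1 = Finset.Iic i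
        · rw [if_pos hP, if_pos ⟨hP, hQ⟩,
            Finset.prod_eq_one (fun a _ => if_pos (hQ a)), one_mul]
        · obtain ⟨a, ha⟩ := not_forall.mp hQ
          have hz : (if ∀ i : Fin n, (p.2 a i).1 = Finset.Iic i then (1 : ℂ) else 0) = 0 :=
            if_neg ha
          rw [Finset.prod_eq_zero (Finset.mem_univ a) hz, mul_zero,
            if_neg (fun hc => hQ hc.2)]
      · rw [if_neg hP, zero_mul, if_neg (fun hc => hP hc.1)]
    · intro i
      funext C
      rw [extAct_rComp, rComp_apply]
      exact gminor_delta g.val (by simp) C (hsuppI i) htri (fun t _ => hdiag t)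

end
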